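/- arXiv:2002.00576 — 4 statements merged into one kernel-verified Lean document; each statement's English description precedes it below -/
import Mathlib

section
/- For all β with 0 ≤ β ≤ 1, the function P_β(z) = -((1-z)/2)·log((1-z)/2) - ((1+z)/2)·log((1+z)/2) + (β/2)·z² on [-1,1] attains its maximum uniquely at z = 0, with maximum value log 2. -/
open Real Set

/-- Curie-Weiss pressure function at inverse temperature `β`. -/
noncomputable def CWP (β z : ℝ) : ℝ :=
  -((1 - z) / 2) * Real.log ((1 - z) / 2) - ((1 + z) / 2) * Real.log ((1 + z) / 2)
    + β / 2 * z ^ 2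

/-- artanh inequality: 2z < log(1+z) - log(1-z) for z ∈ (0,1) -/
lemma lemF {z : ℝ} (h0 : 0 < z) (h1 : z < 1) :
    2 * z < Real.log (1 + z) - Real.log (1 - z) := by
  set f : ℝ → ℝ := fun z => Real.log (1 + z) - Real.log (1 - z) - 2 * z with hf
  have key : StrictMonoOn f (Ico (0:ℝ) 1) := by
    apply strictMonoOn_of_deriv_pos (convex_Ico 0 1)
    · apply ContinuousOn.sub
      apply ContinuousOn.sub
      · exact ((continuous_const.add continuous_id).continuousOn).log
          (fun x hx => by rcases hx with ⟨hx0, hx1⟩; simp only [Pi.add_apply, Pi.sub_apply, id]; nlinarith)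
      · exact ((continuous_const.sub continuous_id).continuousOn).log
          (fun x hx => by rcases hx with ⟨hx0, hx1⟩; simp only [Pi.add_apply, Pi.sub_apply, id]; nlinarith)
      · exact (continuous_const.mul continuous_id).continuousOn
    · intro x hx
      rw [interior_Ico] at hx
      rcases hx with ⟨hx0, hx1⟩
      have h1p : (0:ℝ) < 1 + x := by linarith
      have h1m : (0:ℝ) < 1 - x := by linarith
      have d1 : HasDerivAt (fun z : ℝ => Real.log (1 + z)) (1 / (1 + x)) x := by
        have := (((hasDerivAt_id x).const_add 1)).log (ne_of_gt h1p)
        simpa using this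
      have d2 : HasDerivAt (fun z : ℝ => Real.log (1 - z)) (-1 / (1 - x)) x := by
        have := (((hasDerivAt_id x).const_sub 1)).log (ne_of_gt h1m)
        simpa using this
      have d3 : HasDerivAt (fun z : ℝ => (2:ℝ) * z) 2 x := by
        simpa using (hasDerivAt_id x).const_mul 2
      have d : HasDerivAt f (1 / (1 + x) - -1 / (1 - x) - 2) x := (d1.sub d2).sub d3
      rw [d.deriv]
      rw [div_sub_div _ _ (ne_of_gt h1p) (ne_of_gt h1m)]
      have : (1 * (1 - x) - (1 + x) * -1) / ((1 + x) * (1 - x)) - 2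
          = (2 * x ^ 2) / ((1 + x) * (1 - x)) := by
        field_simp; ring
      rw [this]
      positivity
  have := key (by constructor <;> norm_num) ⟨le_of_lt h0, h1⟩ h0
  simp only [hf] at this
  norm_num at this
  linarith [this]

/-- key: z² < (1-z)log(1-z) + (1+z)log(1+z) for z ∈ (0,1) -/
lemma lemH {z : ℝ} (h0 : 0 < z) (h1 : z < 1) :
    z ^ 2 < (1 - z) * Real.log (1 - z) + (1 + z) * Real.log (1 + z) := by
  set f : ℝ → ℝ := fun z => (1 - z) * Real.log (1 - z) + (1 + z) * Real.log (1 + z) - z ^ 2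
    with hf
  have key : StrictMonoOn f (Ico (0:ℝ) 1) := by
    apply strictMonoOn_of_deriv_pos (convex_Ico 0 1)
    · apply ContinuousOn.sub
      apply ContinuousOn.add
      · exact (continuous_const.sub continuous_id).continuousOn.mul
          (((continuous_const.sub continuous_id).continuousOn).log
            (fun x hx => by rcases hx with ⟨hx0, hx1⟩; simp only [Pi.add_apply, Pi.sub_apply, id]; nlinarith))
      · exact (continuous_const.add continuous_id).continuousOn.mul
          (((continuous_const.add continuous_id).continuousOn).log
            (fun x hx => by rcases hx with ⟨hx0, hx1⟩; simp only [Pi.add_apply, Pi.sub_apply, id]; nlinarith))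
      · exact (continuous_pow 2).continuousOn
    · intro x hx
      rw [interior_Ico] at hx
      rcases hx with ⟨hx0, hx1⟩
      have h1p : (0:ℝ) < 1 + x := by linarith
      have h1m : (0:ℝ) < 1 - x := by linarith
      have dm : HasDerivAt (fun z : ℝ => (1 - z)) (-1) x := by
        simpa using (hasDerivAt_id x).const_sub 1
      have dp : HasDerivAt (fun z : ℝ => (1 + z)) 1 x := by
        simpa using (hasDerivAt_id x).const_add 1
      have d1 : HasDerivAt (fun z : ℝ => (1 - z) * Real.log (1 - z))
          (-1 * Real.log (1 - x) + (1 - x) * (-1 / (1 - x))) x :=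
        dm.mul (dm.log (ne_of_gt h1m))
      have d2 : HasDerivAt (fun z : ℝ => (1 + z) * Real.log (1 + z))
          (1 * Real.log (1 + x) + (1 + x) * (1 / (1 + x))) x :=
        dp.mul (dp.log (ne_of_gt h1p))
      have d3 : HasDerivAt (fun z : ℝ => z ^ 2) (2 * x) x := by
        simpa using hasDerivAt_pow 2 x
      have d : HasDerivAt f (-1 * Real.log (1 - x) + (1 - x) * (-1 / (1 - x))
          + (1 * Real.log (1 + x) + (1 + x) * (1 / (1 + x))) - 2 * x) x := (d1.add d2).sub d3
      rw [d.deriv]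
      have e1 : (1 - x) * (-1 / (1 - x)) = -1 := by field_simp
      have e2 : (1 + x) * (1 / (1 + x)) = 1 := by field_simp
      rw [e1, e2]
      have := lemF hx0 hx1
      linarith
  have := key (by constructor <;> norm_num) ⟨le_of_lt h0, h1⟩ h0
  simp only [hf] at this
  norm_num [Real.log_one] at this
  linarith [this]

lemma lemS {β z : ℝ} (hβ0 : 0 ≤ β) (hβ1 : β ≤ 1) (h0 : -1 < z) (h1 : z < 1) (hne : z ≠ 0) :
    β * z ^ 2 < (1 - z) * Real.log (1 - z) + (1 + z) * Real.log (1 + z) := by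
  have hb : β * z ^ 2 ≤ z ^ 2 := by nlinarith [sq_nonneg z]
  rcases lt_or_gt_of_ne hne with hz | hz
  · have := lemH (z := -z) (by linarith) (by linarith)
    have e : (1 - -z) * Real.log (1 - -z) + (1 + -z) * Real.log (1 + -z)
        = (1 + z) * Real.log (1 + z) + (1 - z) * Real.log (1 - z) := by
      ring_nf
    rw [e] at this
    nlinarith [this]
  · have := lemH hz h1
    linarith

theorem curie_weiss_unique_max (β : ℝ) (hβ0 : 0 ≤ β) (hβ1 : β ≤ 1) :
    CWP β 0 = Real.log 2 ∧
    ∀ z ∈ Set.Icc (-1 : ℝ) 1, z ≠ 0 → CWP β z < Real.log 2 := by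
  have hlog2 : (1:ℝ)/2 < Real.log 2 := by
    have := Real.log_two_gt_d9; linarith
  constructor
  · simp only [CWP]
    rw [show ((1:ℝ) - 0)/2 = 2⁻¹ by norm_num, show ((1:ℝ) + 0)/2 = 2⁻¹ by norm_num,
      Real.log_inv]
    ring
  · intro z hz hne
    rcases hz with ⟨hz1, hz2⟩
    rcases eq_or_lt_of_le hz2 with h | h
    · subst h
      simp only [CWP]
      norm_num [Real.log_one]
      linarith
    rcases eq_or_lt_of_le hz1 with h' | h'
    · rw [← h']
      simp only [CWP]
      norm_num [Real.log_one]
      linarith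
    · have h1m : (0:ℝ) < 1 - z := by linarith
      have h1p : (0:ℝ) < 1 + z := by linarith
      have e1 : Real.log ((1 - z)/2) = Real.log (1 - z) - Real.log 2 :=
        Real.log_div (ne_of_gt h1m) two_ne_zero
      have e2 : Real.log ((1 + z)/2) = Real.log (1 + z) - Real.log 2 :=
        Real.log_div (ne_of_gt h1p) two_ne_zero
      simp only [CWP, e1, e2]
      have key := lemS hβ0 hβ1 h' h hne
      nlinarith [key]
end

section
/- For all β > 1, the function P_β(z) = -((1-z)/2)·log((1-z)/2) - ((1+z)/2)·log((1+z)/2) + (β/2)·z² on (-1,1) has exactly three critical points: 0 and ±z_β for some z_β ∈ (0,1); moreover z = 0 is a strict local minimum and ±z_β are the two global maximizers of P_β on [-1,1]. -/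
/-- Derivative of the Curie-Weiss pressure: `P_β'(z) = (1/2) log((1-z)/(1+z)) + βz`. -/
noncomputable def CWPderiv (β z : ℝ) : ℝ :=
  (1 / 2) * Real.log ((1 - z) / (1 + z)) + β * z

lemma hasDerivAt_CWP (β z : ℝ) (h1 : -1 < z) (h2 : z < 1) :
    HasDerivAt (CWP β) (CWPderiv β z) z := by
  have hm : (0:ℝ) < 1 - z := by linarith
  have hp : (0:ℝ) < 1 + z := by linarith
  have hu : HasDerivAt (fun z : ℝ => (1 - z) / 2) (-(1/2)) z := by
    have := ((hasDerivAt_id z).const_sub 1).div_const 2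
    exact this.congr_deriv (by norm_num)
  have hv : HasDerivAt (fun z : ℝ => (1 + z) / 2) (1/2) z := by
    simpa using ((hasDerivAt_id z).const_add 1).div_const 2
  have h1' : HasDerivAt (fun z : ℝ => ((1 - z)/2) * Real.log ((1-z)/2))
      ((Real.log ((1-z)/2) + 1) * (-(1/2))) z :=
    (Real.hasDerivAt_mul_log (by positivity)).comp z hu
  have h2' : HasDerivAt (fun z : ℝ => ((1 + z)/2) * Real.log ((1+z)/2))
      ((Real.log ((1+z)/2) + 1) * (1/2)) z :=
    (Real.hasDerivAt_mul_log (by positivity)).comp z hv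
  have h3 : HasDerivAt (fun z : ℝ => β / 2 * z ^ 2) (β / 2 * (2 * z)) z := by
    simpa using ((hasDerivAt_pow 2 z).const_mul (β/2))
  have key := ((h1'.neg.sub h2').add h3)
  refine HasDerivAt.congr_deriv (HasDerivAt.congr_of_eventuallyEq key (Filter.EventuallyEq.of_eq ?_)) ?_
  · ext w; simp only [CWP, Pi.add_apply, Pi.sub_apply, Pi.neg_apply]; ring
  · rw [CWPderiv, Real.log_div hm.ne' hp.ne', Real.log_div hm.ne' two_ne_zero,
      Real.log_div hp.ne' two_ne_zero]
    ring

lemma hasDerivAt_CWPderiv (β z : ℝ) (h1 : -1 < z) (h2 : z < 1) :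
    HasDerivAt (CWPderiv β) (β - 1 / (1 - z ^ 2)) z := by
  have hm : (0:ℝ) < 1 - z := by linarith
  have hp : (0:ℝ) < 1 + z := by linarith
  have hq : (0:ℝ) < 1 - z ^ 2 := by nlinarith
  have hu : HasDerivAt (fun z : ℝ => (1 - z : ℝ)) (-1) z := by
    simpa using (hasDerivAt_id z).const_sub 1
  have hv : HasDerivAt (fun z : ℝ => (1 + z : ℝ)) 1 z := by
    simpa using (hasDerivAt_id z).const_add 1
  have hl1 : HasDerivAt (fun z : ℝ => Real.log (1 - z)) (-1 / (1 - z)) z :=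
    hu.log hm.ne'
  have hl2 : HasDerivAt (fun z : ℝ => Real.log (1 + z)) (1 / (1 + z)) z :=
    hv.log hp.ne'
  have h3 : HasDerivAt (fun z : ℝ => β * z) β z := by
    simpa using (hasDerivAt_id z).const_mul β
  have key : HasDerivAt (fun z : ℝ => (1/2) * (Real.log (1 - z) - Real.log (1 + z)) + β * z)
      ((1/2) * (-1 / (1 - z) - 1 / (1 + z)) + β) z := ((hl1.sub hl2).const_mul (1/2)).add h3
  have heq : CWPderiv β =ᶠ[nhds z] fun z => (1/2) * (Real.log (1 - z) - Real.log (1 + z)) + β * z := by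
    filter_upwards [Ioo_mem_nhds h1 h2] with w hw
    rw [CWPderiv, Real.log_div (by linarith [hw.2] : (0:ℝ) < 1 - w).ne' (by linarith [hw.1] : (0:ℝ) < 1 + w).ne']
  refine (key.congr_of_eventuallyEq heq).congr_deriv ?_
  field_simp
  ring

lemma CWPderiv_neg (β z : ℝ) : CWPderiv β (-z) = - CWPderiv β z := by
  simp only [CWPderiv]
  rw [show (1 - -z) = 1 + z by ring, show (1 + -z) = 1 - z by ring,
    show Real.log ((1+z)/(1-z)) = - Real.log ((1-z)/(1+z)) by rw [← Real.log_inv, inv_div]]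
  ring

lemma CWP_neg (β z : ℝ) : CWP β (-z) = CWP β z := by
  simp only [CWP]
  rw [show (1 - -z) = 1 + z by ring, show (1 + -z) = 1 - z by ring]
  ring

lemma CWPderiv_zero (β : ℝ) : CWPderiv β 0 = 0 := by simp [CWPderiv]

lemma CWP_continuous (β : ℝ) : Continuous (CWP β) := by
  have : CWP β = fun z => -(((1-z)/2) * Real.log ((1-z)/2))
      - (((1+z)/2) * Real.log ((1+z)/2)) + β/2 * z^2 := by
    funext z; simp only [CWP]; ring
  rw [this]
  have hf : Continuous fun x : ℝ => x * Real.log x := Real.continuous_mul_log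
  exact (((hf.comp (by continuity)).neg.sub (hf.comp (by continuity))).add (by continuity))

theorem curie_weiss_supercritical (β : ℝ) (hβ : 1 < β) :
    ∃ zβ ∈ Set.Ioo (0 : ℝ) 1,
      ({z ∈ Set.Ioo (-1 : ℝ) 1 | CWPderiv β z = 0} = {-zβ, 0, zβ}) ∧
      (∃ ε > 0, ∀ z : ℝ, z ≠ 0 → |z| < ε → CWP β 0 < CWP β z) ∧
      (∀ z ∈ Set.Icc (-1 : ℝ) 1, CWP β z ≤ CWP β zβ) ∧
      CWP β (-zβ) = CWP β zβ ∧
      (∀ z ∈ Set.Icc (-1 : ℝ) 1, CWP β z = CWP β zβ → z = zβ ∨ z = -zβ) := by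
  have hβ0 : (0:ℝ) < β := by linarith
  set s := Real.sqrt (1 - 1/β) with hs
  have hs2 : s ^ 2 = 1 - 1/β := Real.sq_sqrt (by
    have : 1/β < 1 := by rw [div_lt_one hβ0]; exact hβ
    linarith)
  have hs0 : 0 < s := Real.sqrt_pos.mpr (by
    have : 1/β < 1 := by rw [div_lt_one hβ0]; exact hβ
    linarith)
  have hs1 : s < 1 := by
    nlinarith [hs2, Real.sqrt_nonneg (1 - 1/β), one_div_pos.mpr hβ0]
  -- continuity of CWPderiv on subsets of (-1,1)
  have gcont : ∀ {A : Set ℝ}, A ⊆ Set.Ioo (-1:ℝ) 1 → ContinuousOn (CWPderiv β) A := by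
    intro A hA
    intro x hx
    exact ((hasDerivAt_CWPderiv β x (hA hx).1 (hA hx).2).differentiableAt.continuousAt).continuousWithinAt
  have gderiv : ∀ z : ℝ, -1 < z → z < 1 → deriv (CWPderiv β) z = β - 1/(1 - z^2) :=
    fun z h1 h2 => (hasDerivAt_CWPderiv β z h1 h2).deriv
  -- g strictly monotone on [0,s]
  have gmono : StrictMonoOn (CWPderiv β) (Set.Icc 0 s) := by
    apply strictMonoOn_of_deriv_pos (convex_Icc 0 s)
    · exact gcont (fun x hx => ⟨by linarith [hx.1], by linarith [hx.2]⟩)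
    · intro x hx
      rw [interior_Icc] at hx
      rw [gderiv x (by linarith [hx.1]) (by linarith [hx.2])]
      have hx2 : x ^ 2 < 1 - 1/β := by nlinarith [hx.1, hx.2, hs2]
      have h1 : 1/β < 1 - x^2 := by linarith
      have hpos : 0 < 1 - x^2 := by nlinarith [one_div_pos.mpr hβ0]
      rw [sub_pos, div_lt_iff₀ hpos]
      have := mul_lt_mul_of_pos_left h1 hβ0
      rw [mul_one_div_cancel hβ0.ne'] at this
      linarith
  -- g strictly antitone on [s,1)
  have ganti : StrictAntiOn (CWPderiv β) (Set.Ico s 1) := by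
    apply strictAntiOn_of_deriv_neg (convex_Ico s 1)
    · exact gcont (fun x hx => ⟨by linarith [hx.1], hx.2⟩)
    · intro x hx
      rw [interior_Ico] at hx
      rw [gderiv x (by linarith [hx.1]) hx.2]
      have hx2 : 1 - 1/β < x ^ 2 := by nlinarith [hx.1, hx.2, hs2, hs0]
      have hpos : 0 < 1 - x^2 := by nlinarith [hx.1, hx.2, hs0]
      rw [sub_neg, lt_div_iff₀ hpos]
      have h2 : 1 - x^2 < 1/β := by linarith
      have := mul_lt_mul_of_pos_left h2 hβ0
      rw [mul_one_div_cancel hβ0.ne'] at this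
      linarith
  have gs_pos : 0 < CWPderiv β s := by
    have := gmono (Set.left_mem_Icc.mpr hs0.le) (Set.right_mem_Icc.mpr hs0.le) hs0
    rwa [CWPderiv_zero] at this
  -- the point c where g is negative
  set c := max s (1 - Real.exp (-(2*β))/2) with hc
  have hc1 : c < 1 := by
    apply max_lt hs1
    have := Real.exp_pos (-(2*β))
    linarith
  have hcs : s ≤ c := le_max_left _ _
  have hcb : 1 - Real.exp (-(2*β))/2 ≤ c := le_max_right _ _
  have hc0 : 0 < c := lt_of_lt_of_le hs0 hcs
  have gc_neg : CWPderiv β c < 0 := by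
    have hm : 0 < 1 - c := by linarith
    have hp : 1 ≤ 1 + c := by linarith
    have hratio : (1 - c)/(1 + c) < Real.exp (-(2*β)) := by
      have h1 : (1 - c)/(1 + c) ≤ 1 - c := by
        rw [div_le_iff₀ (by linarith)]
        nlinarith
      have h2 : 1 - c ≤ Real.exp (-(2*β))/2 := by linarith
      have := Real.exp_pos (-(2*β))
      linarith
    have hlog : Real.log ((1 - c)/(1 + c)) < -(2*β) := by
      have := Real.log_lt_log (by positivity) hratio
      rwa [Real.log_exp] at this
    have : β * c < β := by nlinarith
    rw [CWPderiv]
    nlinarith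
  -- IVT to find zβ
  obtain ⟨zβ, hzmem, hgz⟩ : ∃ zβ ∈ Set.Icc s c, CWPderiv β zβ = 0 := by
    have hsub : Set.Icc s c ⊆ Set.Ioo (-1:ℝ) 1 :=
      fun x hx => ⟨by linarith [hx.1], lt_of_le_of_lt hx.2 hc1⟩
    have := intermediate_value_Icc' hcs (gcont hsub)
    obtain ⟨x, hx, hx0⟩ := this ⟨gc_neg.le, gs_pos.le⟩
    exact ⟨x, hx, hx0⟩
  have hz1 : zβ < 1 := lt_of_le_of_lt hzmem.2 hc1
  have hzs : s < zβ := by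
    rcases eq_or_lt_of_le hzmem.1 with h | h
    · exfalso; rw [← h] at hgz; linarith [gs_pos, hgz]
    · exact h
  have hz0 : 0 < zβ := lt_trans hs0 hzs
  -- sign of g on (0,1)
  have gpos : ∀ z : ℝ, 0 < z → z < zβ → 0 < CWPderiv β z := by
    intro z hz hzb
    rcases le_or_gt z s with h | h
    · have := gmono (Set.left_mem_Icc.mpr hs0.le) ⟨hz.le, h⟩ hz
      rwa [CWPderiv_zero] at this
    · have := ganti ⟨h.le, lt_trans hzb hz1⟩ ⟨hzs.le, hz1⟩ hzb
      rwa [hgz] at this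
  have gneg : ∀ z : ℝ, zβ < z → z < 1 → CWPderiv β z < 0 := by
    intro z hzb hz
    have := ganti ⟨hzs.le, hz1⟩ ⟨le_trans hzs.le hzb.le, hz⟩ hzb
    rwa [hgz] at this
  -- P monotone on [0,zβ], antitone on [zβ,1]
  have Pderiv : ∀ z : ℝ, -1 < z → z < 1 → deriv (CWP β) z = CWPderiv β z :=
    fun z h1 h2 => (hasDerivAt_CWP β z h1 h2).deriv
  have Pmono : StrictMonoOn (CWP β) (Set.Icc 0 zβ) := by
    apply strictMonoOn_of_deriv_pos (convex_Icc 0 zβ) (CWP_continuous β).continuousOn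
    intro x hx
    rw [interior_Icc] at hx
    rw [Pderiv x (by linarith [hx.1]) (by linarith [hx.2])]
    exact gpos x hx.1 hx.2
  have Panti : StrictAntiOn (CWP β) (Set.Icc zβ 1) := by
    apply strictAntiOn_of_deriv_neg (convex_Icc zβ 1) (CWP_continuous β).continuousOn
    intro x hx
    rw [interior_Icc] at hx
    rw [Pderiv x (by linarith [hx.1]) hx.2]
    exact gneg x hx.1 hx.2
  have Pabs : ∀ z : ℝ, CWP β |z| = CWP β z := by
    intro z
    rcases abs_choice z with h | h
    · rw [h]
    · rw [h, CWP_neg]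
  refine ⟨zβ, ⟨hz0, hz1⟩, ?_, ?_, ?_, CWP_neg β zβ, ?_⟩
  · -- critical point set
    ext z
    simp only [Set.mem_setOf_eq, Set.mem_insert_iff, Set.mem_singleton_iff, Set.mem_Ioo]
    constructor
    · rintro ⟨⟨hz1', hz2'⟩, hgz'⟩
      rcases lt_trichotomy z 0 with h | h | h
      · left
        have hneg : CWPderiv β (-z) = 0 := by rw [CWPderiv_neg, hgz', neg_zero]
        have h1 : -z < 1 := by linarith
        have h0 : 0 < -z := by linarith
        rcases lt_trichotomy (-z) zβ with hh | hh | hh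
        · exact absurd hneg (gpos (-z) h0 hh).ne'
        · linarith [hh]
        · exact absurd hneg (gneg (-z) hh h1).ne
      · right; left; exact h
      · right; right
        rcases lt_trichotomy z zβ with hh | hh | hh
        · exact absurd hgz' (gpos z h hh).ne'
        · exact hh
        · exact absurd hgz' (gneg z hh hz2').ne
    · rintro (h | h | h) <;> subst h
      · exact ⟨⟨by linarith, by linarith⟩, by rw [CWPderiv_neg, hgz, neg_zero]⟩
      · exact ⟨⟨by norm_num, by norm_num⟩, CWPderiv_zero β⟩
      · exact ⟨⟨by linarith, hz1⟩, hgz⟩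
  · -- strict local min at 0
    refine ⟨zβ, hz0, fun z hz hlt => ?_⟩
    have habs : 0 < |z| := abs_pos.mpr hz
    have := Pmono (Set.left_mem_Icc.mpr hz0.le) ⟨habs.le, hlt.le⟩ habs
    rwa [Pabs] at this
  · -- global max
    intro z hz
    rw [← Pabs z]
    have habs : |z| ∈ Set.Icc (0:ℝ) 1 := ⟨abs_nonneg z, abs_le.mpr ⟨hz.1, hz.2⟩⟩
    rcases le_or_gt |z| zβ with h | h
    · exact Pmono.monotoneOn ⟨habs.1, h⟩ (Set.right_mem_Icc.mpr hz0.le) h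
    · exact (Panti.antitoneOn ⟨le_refl zβ, hz1.le⟩ ⟨h.le, habs.2⟩ h.le).trans_eq rfl
  · -- equality case
    intro z hz heq
    have habs : |z| ∈ Set.Icc (0:ℝ) 1 := ⟨abs_nonneg z, abs_le.mpr ⟨hz.1, hz.2⟩⟩
    have key : |z| = zβ := by
      rcases lt_trichotomy |z| zβ with h | h | h
      · exfalso
        have := Pmono ⟨habs.1, h.le⟩ (Set.right_mem_Icc.mpr hz0.le) h
        rw [Pabs, heq] at this; exact lt_irrefl _ this
      · exact h
      · exfalso
        have := Panti (Set.left_mem_Icc.mpr hz1.le) ⟨h.le, habs.2⟩ h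
        rw [Pabs, heq] at this; exact lt_irrefl _ this
    exact (abs_eq hz0.le).mp key
end

section
/- Let T : X → X be a measurable map, φ : X → ℝ with μ(φ) ≤ 0 for all invariant μ, and μ₀ invariant with μ₀(φ) = 0. If μ₀ is an equilibrium measure for β₁φ (i.e. maximizes h(T,·) + β₁·(·)(φ) over invariant measures), then for every β > β₁, μ₀ is an equilibrium measure for βφ, and the set of equilibrium measures of βφ equals {μ invariant : μ(φ) = 0 and h(T,μ) = h(T,μ₀)}, independent of β. -/
open MeasureTheory

/-- Freezing phase transitions, implication (2) ⇒ (1): if `μ(φ) ≤ 0` for all invariant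
`μ`, `μ₀(φ) = 0` and `μ₀` is an equilibrium measure for `β₁φ`, then for every `β > β₁`,
`μ₀` is an equilibrium measure for `βφ` and the set of equilibrium measures of `βφ`
is `{μ invariant : μ(φ) = 0, h(T,μ) = h(T,μ₀)}`, independent of `β`. -/
theorem equilibrium_freezes
    {X : Type*} [MeasurableSpace X] (T : X → X) (φ : X → ℝ) (ent : Measure X → ℝ)
    (hneg : ∀ μ : Measure X, IsProbabilityMeasure μ → Measure.map T μ = μ →
      ∫ x, φ x ∂μ ≤ 0)
    (μ₀ : Measure X) (h0p : IsProbabilityMeasure μ₀) (h0inv : Measure.map T μ₀ = μ₀)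
    (h0φ : ∫ x, φ x ∂μ₀ = 0) (β₁ : ℝ)
    (heq : ∀ μ : Measure X, IsProbabilityMeasure μ → Measure.map T μ = μ →
      ent μ + β₁ * ∫ x, φ x ∂μ ≤ ent μ₀ + β₁ * ∫ x, φ x ∂μ₀) :
    ∀ β > β₁,
      (∀ μ : Measure X, IsProbabilityMeasure μ → Measure.map T μ = μ →
        ent μ + β * ∫ x, φ x ∂μ ≤ ent μ₀ + β * ∫ x, φ x ∂μ₀) ∧
      {μ : Measure X | IsProbabilityMeasure μ ∧ Measure.map T μ = μ ∧
        ∀ ν : Measure X, IsProbabilityMeasure ν → Measure.map T ν = ν →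
          ent ν + β * ∫ x, φ x ∂ν ≤ ent μ + β * ∫ x, φ x ∂μ}
      = {μ : Measure X | IsProbabilityMeasure μ ∧ Measure.map T μ = μ ∧
          ∫ x, φ x ∂μ = 0 ∧ ent μ = ent μ₀} := by
  intro β hβ
  have key : ∀ μ : Measure X, IsProbabilityMeasure μ → Measure.map T μ = μ →
      ent μ + β * ∫ x, φ x ∂μ ≤ ent μ₀ + β * ∫ x, φ x ∂μ₀ := by
    intro μ hp hinv
    have h1 := heq μ hp hinv
    have h2 := hneg μ hp hinv
    rw [h0φ] at h1 ⊢
    nlinarith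
  refine ⟨key, ?_⟩
  ext μ
  simp only [Set.mem_setOf_eq]
  constructor
  · rintro ⟨hp, hinv, hmax⟩
    have h1 := hmax μ₀ h0p h0inv
    have h2 := key μ hp hinv
    have h3 := hneg μ hp hinv
    have h4 := heq μ hp hinv
    rw [h0φ] at h1 h2 h4
    have hφ0 : ∫ x, φ x ∂μ = 0 := by nlinarith
    refine ⟨hp, hinv, hφ0, ?_⟩
    rw [hφ0] at h1 h2
    linarith
  · rintro ⟨hp, hinv, hφ0, hent⟩
    refine ⟨hp, hinv, fun ν hpν hinvν => ?_⟩
    have := key ν hpν hinvν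
    rw [h0φ] at this
    rw [hφ0, hent]
    linarith
end

section
/- Let h : ℝ → ℝ be the binary-type entropy function h(z) = -z·log z + z (or any bounded continuous h on [r,0] with h(0)=0 and h(z) = o((-z)^α) as z → 0⁻ for some α ∈ (0,1)), bounded above, continuous on [r,0], r < 0, with h(0) = 0. Let F(z) = -(-z)^α for z ≤ 0 with α ∈ (0,1). Then: (a) for all sufficiently large β > 0, h(z) + βF(z) < 0 = h(0) + βF(0) for all z ∈ [r,0), so 0 is the unique maximizer; (b) there exists a least β₀ with h(z) ≤ -β₀F(z) for all z ∈ [r,0], and at β = β₀ there exists z₀ < 0 with h(z₀) + β₀F(z₀) = 0, so the maximum is attained at both 0 and z₀. -/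
open Filter
open scoped Topology

/-- Analytic core of the nonlinear freezing phase transition: with `F(z) = -(-z)^α`,
(a) for all large `β` the function `h + βF` is negative on `[r,0)` so `0` is the unique
maximizer; (b) there is a least `β₀` with `h ≤ -β₀ F` on `[r,0]`, and at `β₀` there is a
second touching point `z₀ < 0` where `h(z₀) + β₀ F(z₀) = 0`. -/
theorem nonlinear_freezing_transition (r : ℝ) (hr : r < 0) (α : ℝ)
    (hα0 : 0 < α) (hα1 : α < 1)
    (h : ℝ → ℝ) (hcont : ContinuousOn h (Set.Icc r 0)) (h0 : h 0 = 0)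
    (hbdd : ∃ M : ℝ, ∀ z ∈ Set.Icc r 0, h z ≤ M)
    (hlittleo : Tendsto (fun z => h z / (-z) ^ α) (𝓝[<] (0 : ℝ)) (𝓝 0))
    (hpos : ∃ z ∈ Set.Ico r 0, 0 < h z) :
    (∃ B : ℝ, ∀ β ≥ B, ∀ z ∈ Set.Ico r 0, h z + β * (-(-z) ^ α) < 0) ∧
    (∃ β₀ > 0, (∀ z ∈ Set.Icc r 0, h z ≤ β₀ * (-z) ^ α) ∧
      (∀ β : ℝ, (∀ z ∈ Set.Icc r 0, h z ≤ β * (-z) ^ α) → β₀ ≤ β) ∧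
      ∃ z₀ ∈ Set.Ico r 0, h z₀ + β₀ * (-(-z₀) ^ α) = 0) := by
  set g : ℝ → ℝ := fun z => h z / (-z) ^ α with hg
  have hg0 : g 0 = 0 := by simp [hg, h0]
  have hpow : ∀ z : ℝ, z < 0 → (0 : ℝ) < (-z) ^ α := fun z hz =>
    Real.rpow_pos_of_pos (by linarith) α
  -- continuity of g on [r,0]
  have hgcont : ContinuousOn g (Set.Icc r 0) := by
    intro z hz
    rcases lt_or_eq_of_le hz.2 with hz0 | hz0
    · exact ContinuousWithinAt.div (hcont z hz)
        (((continuous_neg.continuousAt).rpow_const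
          (Or.inl (by linarith : -z ≠ 0))).continuousWithinAt)
        (ne_of_gt (hpow z hz0))
    · subst hz0
      have hsub : Set.Icc r (0:ℝ) ⊆ Set.Iic 0 := fun x hx => hx.2
      have hpure : Tendsto g (pure (0:ℝ)) (𝓝 0) := by
        simpa [hg0] using tendsto_pure_nhds g 0
      have h1 : Tendsto g (𝓝[Set.Iic (0:ℝ)] 0) (𝓝 0) := by
        have heq : Set.Iic (0:ℝ) = insert 0 (Set.Iio 0) := by
          ext x; simp [le_iff_lt_or_eq, or_comm]
        rw [heq, nhdsWithin_insert, tendsto_sup]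
        exact ⟨hpure, hlittleo⟩
      have h2 : ContinuousWithinAt g (Set.Iic 0) 0 := by
        rw [ContinuousWithinAt, hg0]; exact h1
      exact h2.mono hsub
  -- max of g on [r,0]
  obtain ⟨z₀, hz₀mem, hz₀max⟩ :=
    (isCompact_Icc : IsCompact (Set.Icc r (0:ℝ))).exists_isMaxOn
      ⟨0, by constructor <;> linarith⟩ hgcont
  set β₀ := g z₀ with hβ₀
  obtain ⟨zp, hzp, hzppos⟩ := hpos
  have hzpmem : zp ∈ Set.Icc r 0 := ⟨hzp.1, le_of_lt hzp.2⟩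
  have hβ₀pos : 0 < β₀ := by
    have := hz₀max hzpmem
    have hgzp : 0 < g zp := div_pos hzppos (hpow zp hzp.2)
    exact lt_of_lt_of_le hgzp this
  have hz₀ne : z₀ < 0 := by
    rcases lt_or_eq_of_le hz₀mem.2 with hlt | heq
    · exact hlt
    · exfalso; rw [heq] at hβ₀; rw [hg0] at hβ₀; linarith [hβ₀pos.trans_eq hβ₀]
  -- the key inequality
  have hineq : ∀ z ∈ Set.Icc r (0:ℝ), h z ≤ β₀ * (-z) ^ α := by
    intro z hz
    rcases lt_or_eq_of_le hz.2 with hlt | heq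
    · have hle : h z / (-z) ^ α ≤ β₀ := hz₀max hz
      rw [div_le_iff₀ (hpow z hlt)] at hle
      linarith
    · subst heq; simp [h0, Real.zero_rpow hα0.ne']
  have htouch : h z₀ = β₀ * (-z₀) ^ α := by
    rw [hβ₀, hg]
    field_simp [ne_of_gt (hpow z₀ hz₀ne)]
  constructor
  · refine ⟨β₀ + 1, fun β hβ z hz => ?_⟩
    have h1 := hineq z ⟨hz.1, le_of_lt hz.2⟩
    have h2 : β₀ * (-z) ^ α < β * (-z) ^ α := by
      apply mul_lt_mul_of_pos_right _ (hpow z hz.2)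
      linarith
    nlinarith [hpow z hz.2]
  · refine ⟨β₀, hβ₀pos, hineq, fun β hβ => ?_, z₀, ⟨hz₀mem.1, hz₀ne⟩, by linarith [htouch]⟩
    have := hβ z₀ hz₀mem
    rw [htouch] at this
    exact le_of_mul_le_mul_right (by linarith) (hpow z₀ hz₀ne)
end
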